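/- Let H be a vertex-minimal finite simple graph with θ(H) ≤ 7 and χ'_s(H) > 13 (i.e., every proper vertex-deleted subgraph has strong chromatic index at most 13). Then H has no vertex of degree 1. -/

import Mathlib

open SimpleGraph

variable {V : Type*}

/-- Two edges are at distance at most 2 (they "see" each other): distinct and
some endpoint of one equals or is adjacent to some endpoint of the other. -/
def EdgeSees (G : SimpleGraph V) (e e' : Sym2 V) : Prop :=
  e ≠ e' ∧ ∃ a ∈ e, ∃ b ∈ e', a = b ∨ G.Adj a b

/-- `G` admits a strong `N`-edge-coloring. -/
def HasStrongColoring (G : SimpleGraph V) (N : ℕ) : Prop :=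
  ∃ f : G.edgeSet → Fin N, ∀ e e' : G.edgeSet, EdgeSees G e.val e'.val → f e ≠ f e'

/-- `G − v`: delete the vertex `v` (remove all edges incident to it). -/
def DelV (G : SimpleGraph V) (v : V) : SimpleGraph V where
  Adj a b := G.Adj a b ∧ a ≠ v ∧ b ≠ v
  symm := ⟨fun _ _ h => ⟨h.1.symm, h.2.2, h.2.1⟩⟩
  loopless := ⟨fun a h => G.irrefl h.1⟩

lemma edgeSees_symm (G : SimpleGraph V) {e e' : Sym2 V} (h : EdgeSees G e e') :
    EdgeSees G e' e := by
  obtain ⟨hne, a, ha, b, hb, hab⟩ := h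
  exact ⟨hne.symm, b, hb, a, ha, hab.imp Eq.symm (fun h => h.symm)⟩

/-- A minimal counterexample with θ ≤ 7, χ'ₛ > 13 has no 1-vertex. -/
theorem stmt4 [Fintype V] (H : SimpleGraph V) [DecidableRel H.Adj]
    (hore : ∀ u w, H.Adj u w → H.degree u + H.degree w ≤ 7)
    (hnc : ¬ HasStrongColoring H 13)
    (hmin : ∀ v, HasStrongColoring (DelV H v) 13) :
    ∀ v, H.degree v ≠ 1 := by
  intro v hv
  classical
  obtain ⟨u, hu⟩ := Finset.card_eq_one.mp hv
  have hadj : H.Adj v u := by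
    have : u ∈ H.neighborFinset v := by rw [hu]; simp
    exact (H.mem_neighborFinset v u).mp this
  have huniq : ∀ w, H.Adj v w → w = u := by
    intro w hw
    have : w ∈ H.neighborFinset v := (H.mem_neighborFinset v w).mpr hw
    rw [hu] at this; simpa using this
  -- any edge of H containing v is s(u,v)
  have hedge : ∀ e ∈ H.edgeSet, v ∈ e → e = s(u,v) := by
    intro e he hve
    induction e with
    | _ a b =>
      rw [mem_edgeSet] at he
      rcases Sym2.mem_iff.mp hve with rfl | rfl
      · rw [huniq b he]; exact Sym2.eq_swap
      · rw [huniq a he.symm]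
  have hvnot : ∀ e ∈ H.edgeSet, e ≠ s(u,v) → v ∉ e := fun e he hne hv' => hne (hedge e he hv')
  have hDel : ∀ e ∈ H.edgeSet, e ≠ s(u,v) → e ∈ (DelV H v).edgeSet := by
    intro e he hne
    have hv' := hvnot e he hne
    induction e with
    | _ a b =>
      rw [mem_edgeSet] at he ⊢
      exact ⟨he, fun h => hv' (h ▸ Sym2.mem_mk_left a b),
        fun h => hv' (h ▸ Sym2.mem_mk_right a b)⟩
  have hDel' : ∀ e ∈ (DelV H v).edgeSet, e ∈ H.edgeSet ∧ v ∉ e := by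
    intro e he
    induction e with
    | _ a b =>
      rw [mem_edgeSet] at he
      refine ⟨mem_edgeSet H |>.mpr he.1, fun hv' => ?_⟩
      rcases Sym2.mem_iff.mp hv' with rfl | rfl
      · exact he.2.1 rfl
      · exact he.2.2 rfl
  obtain ⟨f, hf⟩ := hmin v
  set F : Sym2 V → Fin 13 :=
    fun e => if h : e ∈ (DelV H v).edgeSet then f ⟨e, h⟩ else 0 with hF
  set T : Finset (Sym2 V) :=
    Finset.univ.filter (fun e => e ∈ (DelV H v).edgeSet ∧ EdgeSees H s(u,v) e) with hT
  set W : Finset V := insert u ((H.neighborFinset u).erase v) with hW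
  -- the union bound
  have hsub : insert s(u,v) T ⊆ W.biUnion (fun w => H.incidenceFinset w) := by
    intro e he
    rcases Finset.mem_insert.mp he with rfl | heT
    · refine Finset.mem_biUnion.mpr ⟨u, Finset.mem_insert_self _ _, ?_⟩
      rw [mem_incidenceFinset]
      exact ⟨mem_edgeSet H |>.mpr hadj.symm, Sym2.mem_mk_left u v⟩
    · rw [hT, Finset.mem_filter] at heT
      obtain ⟨-, heD, -, a, ha, b, hb, hab⟩ := heT
      obtain ⟨heH, hvne⟩ := hDel' e heD
      have hbv : b ≠ v := fun h => hvne (h ▸ hb)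
      refine Finset.mem_biUnion.mpr ?_
      have hbinc : e ∈ H.incidenceFinset b := by
        rw [mem_incidenceFinset]; exact ⟨heH, hb⟩
      rcases Sym2.mem_iff.mp ha with hau | hav
      · rcases hab with heq | hab'
        · refine ⟨u, Finset.mem_insert_self _ _, ?_⟩
          rw [mem_incidenceFinset]; exact ⟨heH, (hau.symm.trans heq) ▸ hb⟩
        · refine ⟨b, Finset.mem_insert_of_mem ?_, hbinc⟩
          exact Finset.mem_erase.mpr ⟨hbv, (H.mem_neighborFinset u b).mpr (hau ▸ hab')⟩
      · rcases hab with heq | hab'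
        · exact absurd ((hav.symm.trans heq) ▸ hb) hvne
        · have hbu : b = u := huniq b (hav ▸ hab')
          exact ⟨b, hbu ▸ Finset.mem_insert_self _ _, hbinc⟩
  have hsv_notT : s(u,v) ∉ T := by
    rw [hT, Finset.mem_filter]
    rintro ⟨-, hD, -⟩
    exact (hDel' _ hD).2 (Sym2.mem_mk_right u v)
  set d := H.degree u with hd
  have hdle : 1 + d ≤ 7 := by
    have := hore v u hadj; rwa [show H.degree v = 1 from hv] at this
  have hvmem : v ∈ H.neighborFinset u := (H.mem_neighborFinset u v).mpr hadj.symm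
  have hd1 : 1 ≤ d := by
    rw [hd, ← H.card_neighborFinset_eq_degree]
    exact Finset.card_pos.mpr ⟨v, hvmem⟩
  have hcard_erase : ((H.neighborFinset u).erase v).card = d - 1 := by
    rw [Finset.card_erase_of_mem hvmem, H.card_neighborFinset_eq_degree]
  have hsumW : ∑ w ∈ W, H.degree w ≤ d + (d - 1) * (7 - d) := by
    rw [hW, Finset.sum_insert (by simp)]
    have hbound : ∑ w ∈ (H.neighborFinset u).erase v, H.degree w ≤ (d - 1) * (7 - d) := by
      calc ∑ w ∈ (H.neighborFinset u).erase v, H.degree w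
          ≤ ((H.neighborFinset u).erase v).card * (7 - d) := by
            refine Finset.sum_le_card_nsmul _ _ _ ?_
            intro w hw
            have hadj' : H.Adj u w :=
              (H.mem_neighborFinset u w).mp (Finset.mem_of_mem_erase hw)
            have := hore u w hadj'
            omega
        _ = (d - 1) * (7 - d) := by rw [hcard_erase]
    omega
  have hTcard : T.card ≤ 12 := by
    have h1 : (insert s(u,v) T).card ≤ ∑ w ∈ W, H.degree w := by
      calc (insert s(u,v) T).card ≤ (W.biUnion (fun w => H.incidenceFinset w)).card :=
            Finset.card_le_card hsub
        _ ≤ ∑ w ∈ W, (H.incidenceFinset w).card := Finset.card_biUnion_le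
        _ = ∑ w ∈ W, H.degree w := by
            refine Finset.sum_congr rfl fun w _ => H.card_incidenceFinset_eq_degree w
    rw [Finset.card_insert_of_notMem hsv_notT] at h1
    have := hsumW
    have hd6 : d ≤ 6 := by omega
    interval_cases d <;> omega
  -- pick a free color
  obtain ⟨c, hc⟩ : ∃ c : Fin 13, c ∉ T.image F := by
    by_contra h
    push_neg at h
    have heq : T.image F = Finset.univ := Finset.eq_univ_iff_forall.mpr h
    have h13 : (T.image F).card = 13 := by rw [heq]; simp
    have := Finset.card_image_le (s := T) (f := F)
    omega
  -- define the coloring of H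
  refine hnc ⟨fun e => if e.val = s(u,v) then c else F e.val, ?_⟩
  intro e e' hsee
  have hne := hsee.1
  dsimp only
  have key : ∀ (x : H.edgeSet), x.val ≠ s(u,v) → EdgeSees H s(u,v) x.val →
      F x.val ∈ T.image F := by
    intro x hx hsx
    refine Finset.mem_image_of_mem F ?_
    rw [hT, Finset.mem_filter]
    exact ⟨Finset.mem_univ _, hDel x.val x.2 hx, hsx⟩
  by_cases h1 : e.val = s(u,v) <;> by_cases h2 : e'.val = s(u,v)
  · exact absurd (h1.trans h2.symm) hne
  · rw [if_pos h1, if_neg h2]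
    have hmem : F e'.val ∈ T.image F := key e' h2 (h1 ▸ hsee)
    exact fun hcc => hc (hcc ▸ hmem)
  · rw [if_neg h1, if_pos h2]
    have hmem : F e.val ∈ T.image F := key e h1 (h2 ▸ edgeSees_symm H hsee)
    exact fun hcc => hc (hcc.symm ▸ hmem)
  · rw [if_neg h1, if_neg h2]
    have hD1 : e.val ∈ (DelV H v).edgeSet := hDel e.val e.2 h1
    have hD2 : e'.val ∈ (DelV H v).edgeSet := hDel e'.val e'.2 h2
    rw [hF]
    simp only [dif_pos hD1, dif_pos hD2]
    refine hf ⟨e.val, hD1⟩ ⟨e'.val, hD2⟩ ?_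
    obtain ⟨hne', a, ha, b, hb, hab⟩ := hsee
    refine ⟨hne', a, ha, b, hb, hab.imp id fun hab' => ?_⟩
    exact ⟨hab', fun h => (hDel' _ hD1).2 (h ▸ ha), fun h => (hDel' _ hD2).2 (h ▸ hb)⟩
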